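/- Let κ_H > 0 and κ_G be real numbers with κ_G/κ_H ∈ (-2, 0). Then there exist constants c1 > 0 and c2 > 0 such that for all real numbers k1, k2, H0, one has (κ_H/2)(k1 + k2 - H0)² + κ_G k1 k2 + c1 H0² ≥ c2 (k1² + k2²). In fact one may take, for any ε > 0 with (1+ε)κ_G/κ_H ∈ (-2,0), c1 = κ_H/(2ε) and c2 = (κ_H - |κ_H + κ_G(1+ε)|)/(2(1+ε)). -/

import Mathlib

lemma key_ineq (κH κG ε : ℝ) (hH : 0 < κH) (hε : 0 < ε)
    (h : (1 + ε) * κG / κH ∈ Set.Ioo (-2 : ℝ) 0) :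
    ∀ k1 k2 H0 : ℝ,
        (κH / 2) * (k1 + k2 - H0) ^ 2 + κG * (k1 * k2) + (κH / (2 * ε)) * H0 ^ 2 ≥
          ((κH - |κH + κG * (1 + ε)|) / (2 * (1 + ε))) * (k1 ^ 2 + k2 ^ 2) := by
  obtain ⟨h1, h2⟩ := h
  have h1' : -2 * κH < (1 + ε) * κG := by
    have := (div_lt_iff₀ hH).mp h2
    nlinarith [(lt_div_iff₀ hH).mp h1]
  have h2' : (1 + ε) * κG < 0 := by
    have := (div_lt_iff₀ hH).mp h2; linarith
  have h1e : (0:ℝ) < 1 + ε := by linarith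
  intro k1 k2 H0
  rw [ge_iff_le, div_mul_eq_mul_div, div_le_iff₀ (by positivity : (0:ℝ) < 2 * (1 + ε))]
  have hD2 : κH / (2 * ε) * H0 ^ 2 * (2 * ε) = κH * H0 ^ 2 := by
    field_simp
  rw [← mul_le_mul_iff_right₀ hε]
  have hD3 : (1+ε) * (κH / (2 * ε) * H0 ^ 2 * (2 * ε)) = (1+ε) * (κH * H0 ^ 2) := by
    rw [hD2]
  rcases abs_cases (κH + κG * (1 + ε)) with ⟨hA, hs⟩ | ⟨hA, hs⟩ <;> rw [hA]
  · nlinarith [mul_nonneg hH.le (sq_nonneg (ε*(k1+k2) - (1+ε)*H0)), hD3,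
      mul_nonneg hε.le (mul_nonneg hs (sq_nonneg (k1+k2)))]
  · nlinarith [mul_nonneg hH.le (sq_nonneg (ε*(k1+k2) - (1+ε)*H0)), hD3,
      mul_nonneg hε.le (mul_nonneg (neg_nonneg.mpr hs.le) (sq_nonneg (k1-k2)))]

theorem stmt_3 (κH κG : ℝ) (hH : 0 < κH) (hG : κG / κH ∈ Set.Ioo (-2 : ℝ) 0) :
    (∃ c1 c2 : ℝ, 0 < c1 ∧ 0 < c2 ∧
      ∀ k1 k2 H0 : ℝ,
        (κH / 2) * (k1 + k2 - H0) ^ 2 + κG * (k1 * k2) + c1 * H0 ^ 2 ≥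
          c2 * (k1 ^ 2 + k2 ^ 2)) ∧
    (∀ ε : ℝ, 0 < ε → (1 + ε) * κG / κH ∈ Set.Ioo (-2 : ℝ) 0 →
      ∀ k1 k2 H0 : ℝ,
        (κH / 2) * (k1 + k2 - H0) ^ 2 + κG * (k1 * k2) + (κH / (2 * ε)) * H0 ^ 2 ≥
          ((κH - |κH + κG * (1 + ε)|) / (2 * (1 + ε))) * (k1 ^ 2 + k2 ^ 2)) := by
  obtain ⟨h1, h2⟩ := hG
  have hGneg : κG < 0 := by
    have := (div_lt_iff₀ hH).mp h2; linarith
  have h1' : -2 * κH < κG := by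
    have := (lt_div_iff₀ hH).mp h1; linarith
  set ε : ℝ := ((-2) * κH / κG - 1) / 2 with hεdef
  have hlt : (1:ℝ) < -2 * κH / κG := by
    rw [lt_div_iff_of_neg hGneg]; linarith
  have hε : 0 < ε := by simp only [hεdef]; linarith
  have h1e : (1 + ε) < -2 * κH / κG := by simp only [hεdef]; linarith
  have hx : -2 * κH / κG * κG = -2 * κH := div_mul_cancel₀ _ hGneg.ne
  have hmul : -2 * κH < (1 + ε) * κG := by
    have := mul_lt_mul_of_neg_right h1e hGneg
    linarith
  have hmem : (1 + ε) * κG / κH ∈ Set.Ioo (-2 : ℝ) 0 := by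
    constructor
    · rw [lt_div_iff₀ hH]; linarith
    · rw [div_neg_iff]
      right; exact ⟨by nlinarith, hH⟩
  have habs : |κH + κG * (1 + ε)| < κH := by
    rw [abs_lt]
    constructor <;> nlinarith
  exact ⟨⟨κH / (2 * ε), (κH - |κH + κG * (1 + ε)|) / (2 * (1 + ε)), by positivity,
      div_pos (sub_pos.mpr habs) (by positivity),
      key_ineq κH κG ε hH hε hmem⟩, fun ε' hε' hmem' => key_ineq κH κG ε' hH hε' hmem'⟩
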